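/- Let A be a Banach algebra, X a Banach A-bimodule, and T, S : A → A continuous linear maps. Suppose that for every x'' ∈ X**, the map a'' ↦ x''T''(a'') from A** to X** is weak-star to weak continuous. If D : A → X* is a T-S-derivation, then D'' : A** → X*** is a T''-S''-derivation (with respect to the first Arens product on A** and the induced A**-bimodule structure on X***). -/

import Mathlib

set_option maxHeartbeats 1000000

open Filter Topology ContinuousLinearMap NormedSpace

noncomputable section DualSetup

/-- `NormedSpace.Dual` of the older Mathlib (since replaced there by the abbreviation
`StrongDual`): the topological dual `E →L[𝕜] 𝕜`, as a type of its own. -/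
def NormedSpace.Dual (𝕜 : Type*) [NontriviallyNormedField 𝕜] (E : Type*)
    [SeminormedAddCommGroup E] [NormedSpace 𝕜 E] : Type _ :=
  E →L[𝕜] 𝕜

instance NormedSpace.Dual.instSeminormedAddCommGroup (𝕜 : Type*) [NontriviallyNormedField 𝕜]
    (E : Type*) [SeminormedAddCommGroup E] [NormedSpace 𝕜 E] :
    SeminormedAddCommGroup (NormedSpace.Dual 𝕜 E) :=
  ContinuousLinearMap.toSeminormedAddCommGroup

instance NormedSpace.Dual.instNormedSpace (𝕜 : Type*) [NontriviallyNormedField 𝕜]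
    (E : Type*) [SeminormedAddCommGroup E] [NormedSpace 𝕜 E] :
    NormedSpace 𝕜 (NormedSpace.Dual 𝕜 E) :=
  ContinuousLinearMap.toNormedSpace

instance NormedSpace.Dual.instFunLike (𝕜 : Type*) [NontriviallyNormedField 𝕜]
    (E : Type*) [SeminormedAddCommGroup E] [NormedSpace 𝕜 E] :
    FunLike (NormedSpace.Dual 𝕜 E) E 𝕜 :=
  ContinuousLinearMap.funLike

instance NormedSpace.Dual.instContinuousLinearMapClass (𝕜 : Type*) [NontriviallyNormedField 𝕜]
    (E : Type*) [SeminormedAddCommGroup E] [NormedSpace 𝕜 E] :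
    ContinuousLinearMapClass (NormedSpace.Dual 𝕜 E) 𝕜 E 𝕜 :=
  ContinuousLinearMap.continuousSemilinearMapClass

/-- `WeakDual.toNormedDual` of the older Mathlib (now `WeakDual.toStrongDual`). -/
def WeakDual.toNormedDual {𝕜 : Type*} [NontriviallyNormedField 𝕜] {E : Type*}
    [SeminormedAddCommGroup E] [NormedSpace 𝕜 E] : WeakDual 𝕜 E ≃ₗ[𝕜] NormedSpace.Dual 𝕜 E :=
  WeakDual.toStrongDual

end DualSetup

noncomputable section ArensSetup

/-- The adjoint (transpose) of a continuous linear map between normed spaces. -/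
def adjCLM {E F : Type*} [SeminormedAddCommGroup E] [NormedSpace ℝ E]
    [SeminormedAddCommGroup F] [NormedSpace ℝ F] (T : E →L[ℝ] F) :
    Dual ℝ F →L[ℝ] Dual ℝ E :=
  (ContinuousLinearMap.compL ℝ E F ℝ).flip T

@[simp] theorem adjCLM_apply {E F : Type*} [SeminormedAddCommGroup E] [NormedSpace ℝ E]
    [SeminormedAddCommGroup F] [NormedSpace ℝ F] (T : E →L[ℝ] F) (g : Dual ℝ F) (x : E) :
    adjCLM T g x = g (T x) := rfl

/-- One-step Arens-type adjoint of a bounded bilinear map: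
`ext1 β g' e = g' ∘ (β e)`. -/
def ext1 {E F G : Type*} [SeminormedAddCommGroup E] [NormedSpace ℝ E]
    [SeminormedAddCommGroup F] [NormedSpace ℝ F] [SeminormedAddCommGroup G] [NormedSpace ℝ G]
    (β : E →L[ℝ] F →L[ℝ] G) : Dual ℝ G →L[ℝ] E →L[ℝ] Dual ℝ F :=
  ((ContinuousLinearMap.compL ℝ F G ℝ).flip.comp β).flip

@[simp] theorem ext1_apply {E F G : Type*} [SeminormedAddCommGroup E] [NormedSpace ℝ E]
    [SeminormedAddCommGroup F] [NormedSpace ℝ F] [SeminormedAddCommGroup G] [NormedSpace ℝ G]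
    (β : E →L[ℝ] F →L[ℝ] G) (g' : Dual ℝ G) (e : E) (f : F) :
    ext1 β g' e f = g' (β e f) := rfl

/-- Triple adjoint: the (first) Arens extension of a bounded bilinear map to the
second duals. -/
def ext3 {E F G : Type*} [SeminormedAddCommGroup E] [NormedSpace ℝ E]
    [SeminormedAddCommGroup F] [NormedSpace ℝ F] [SeminormedAddCommGroup G] [NormedSpace ℝ G]
    (β : E →L[ℝ] F →L[ℝ] G) :
    Dual ℝ (Dual ℝ E) →L[ℝ] Dual ℝ (Dual ℝ F) →L[ℝ] Dual ℝ (Dual ℝ G) :=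
  ext1 (ext1 (ext1 β))

variable (A : Type*) [NonUnitalNormedRing A] [NormedSpace ℝ A]
  [SMulCommClass ℝ A A] [IsScalarTower ℝ A A] [CompleteSpace A]

/-- The first (left) Arens product on `A**`: `⟨a''b'', a'⟩ = ⟨a'', b''a'⟩`. -/
def fArens : Dual ℝ (Dual ℝ A) →L[ℝ] Dual ℝ (Dual ℝ A) →L[ℝ] Dual ℝ (Dual ℝ A) :=
  ext3 (ContinuousLinearMap.mul ℝ A)

/-- The second (right) Arens product on `A**`: `⟨a''∘b'', a'⟩ = ⟨b'', a'∘a''⟩`. -/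
def sArens : Dual ℝ (Dual ℝ A) →L[ℝ] Dual ℝ (Dual ℝ A) →L[ℝ] Dual ℝ (Dual ℝ A) :=
  (ext3 (ContinuousLinearMap.mul ℝ A).flip).flip

/-- `A` is Arens regular when the two Arens products on `A**` coincide. -/
def ArensRegular : Prop := fArens A = sArens A

variable {A}

/-- Weak-star to weak continuity for a map from the dual of `E` into `F`. -/
def WStarToWCont {E F : Type*} [SeminormedAddCommGroup E] [NormedSpace ℝ E]
    [SeminormedAddCommGroup F] [NormedSpace ℝ F] (f : Dual ℝ E → F) : Prop :=
  Continuous fun x : WeakDual ℝ E => toWeakSpace ℝ F (f (WeakDual.toNormedDual x))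

variable (A)

/-- The second adjoint `T'' : A** → A**` of `T : A → A`. -/
def secondAdj (T : A →L[ℝ] A) : Dual ℝ (Dual ℝ A) →L[ℝ] Dual ℝ (Dual ℝ A) :=
  adjCLM (adjCLM T)

/-- Left action of `A` on `A*`: `⟨a·a', b⟩ = ⟨a', ba⟩`. -/
def dualLeft : A →L[ℝ] Dual ℝ A →L[ℝ] Dual ℝ A :=
  (ext1 (ContinuousLinearMap.mul ℝ A).flip).flip

/-- Right action of `A` on `A*`: `⟨a'·a, b⟩ = ⟨a', ab⟩`. -/
def dualRight : Dual ℝ A →L[ℝ] A →L[ℝ] Dual ℝ A :=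
  ext1 (ContinuousLinearMap.mul ℝ A)

/-- Left action of `A**` (first Arens product) on `A***`. -/
def dualLeft2 : Dual ℝ (Dual ℝ A) →L[ℝ] Dual ℝ (Dual ℝ (Dual ℝ A)) →L[ℝ]
    Dual ℝ (Dual ℝ (Dual ℝ A)) :=
  (ext1 (fArens A).flip).flip

/-- Right action of `A**` (first Arens product) on `A***`. -/
def dualRight2 : Dual ℝ (Dual ℝ (Dual ℝ A)) →L[ℝ] Dual ℝ (Dual ℝ A) →L[ℝ]
    Dual ℝ (Dual ℝ (Dual ℝ A)) :=
  ext1 (fArens A)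

end ArensSetup

section BimoduleSetup

set_option maxHeartbeats 1000000

open Filter Topology ContinuousLinearMap NormedSpace

/-- A Banach `A`-bimodule: bounded bilinear left and right actions satisfying the
usual compatibility axioms. -/
structure BanachBimodule (A X : Type*) [NonUnitalNormedRing A] [NormedSpace ℝ A]
    [SMulCommClass ℝ A A] [IsScalarTower ℝ A A]
    [NormedAddCommGroup X] [NormedSpace ℝ X] [CompleteSpace X] where
  l : A →L[ℝ] X →L[ℝ] X
  r : X →L[ℝ] A →L[ℝ] X
  l_mul : ∀ a b x, l (a * b) x = l a (l b x)
  r_mul : ∀ x a b, r (r x a) b = r x (a * b)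
  l_r : ∀ a x b, l a (r x b) = r (l a x) b

variable {A X : Type*} [NonUnitalNormedRing A] [NormedSpace ℝ A]
  [SMulCommClass ℝ A A] [IsScalarTower ℝ A A] [CompleteSpace A]
  [NormedAddCommGroup X] [NormedSpace ℝ X] [CompleteSpace X]

/-- Left action of `A` on `X*`: `⟨a·f, x⟩ = ⟨f, x·a⟩`. -/
noncomputable def modDualLeft (M : BanachBimodule A X) : A →L[ℝ] Dual ℝ X →L[ℝ] Dual ℝ X :=
  (ext1 M.r.flip).flip

/-- Right action of `A` on `X*`: `⟨f·a, x⟩ = ⟨f, a·x⟩`. -/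
noncomputable def modDualRight (M : BanachBimodule A X) : Dual ℝ X →L[ℝ] A →L[ℝ] Dual ℝ X :=
  ext1 M.l

/-- Left action of `A**` on `X**` (first Arens extension). -/
noncomputable def modL2 (M : BanachBimodule A X) :
    Dual ℝ (Dual ℝ A) →L[ℝ] Dual ℝ (Dual ℝ X) →L[ℝ] Dual ℝ (Dual ℝ X) :=
  ext3 M.l

/-- Right action of `A**` on `X**` (first Arens extension); `modR2 M x'' a'' = x''a''`. -/
noncomputable def modR2 (M : BanachBimodule A X) :
    Dual ℝ (Dual ℝ X) →L[ℝ] Dual ℝ (Dual ℝ A) →L[ℝ] Dual ℝ (Dual ℝ X) :=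
  ext3 M.r

/-- Left action of `A**` on `X***`: `⟨a''·x''', x''⟩ = ⟨x''', x''a''⟩`. -/
noncomputable def modL3 (M : BanachBimodule A X) :
    Dual ℝ (Dual ℝ A) →L[ℝ] Dual ℝ (Dual ℝ (Dual ℝ X)) →L[ℝ] Dual ℝ (Dual ℝ (Dual ℝ X)) :=
  (ext1 (modR2 M).flip).flip

/-- Right action of `A**` on `X***`: `⟨x'''·a'', x''⟩ = ⟨x''', a''x''⟩`. -/
noncomputable def modR3 (M : BanachBimodule A X) :
    Dual ℝ (Dual ℝ (Dual ℝ X)) →L[ℝ] Dual ℝ (Dual ℝ A) →L[ℝ] Dual ℝ (Dual ℝ (Dual ℝ X)) :=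
  ext1 (modL2 M)

end BimoduleSetup

section DerivationSetup

variable {B Y : Type*} [SeminormedAddCommGroup B] [NormedSpace ℝ B]
  [SeminormedAddCommGroup Y] [NormedSpace ℝ Y]

/-- `D` is a derivation with respect to the multiplication `m` and the module
actions `l`, `r`. -/
def IsDeriv (m : B →L[ℝ] B →L[ℝ] B) (l : B →L[ℝ] Y →L[ℝ] Y)
    (r : Y →L[ℝ] B →L[ℝ] Y) (D : B →L[ℝ] Y) : Prop :=
  ∀ a b, D (m a b) = l a (D b) + r (D a) b

/-- `D` is an inner derivation: `D a = a·y − y·a` for some fixed `y`. -/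
def IsInner (l : B →L[ℝ] Y →L[ℝ] Y) (r : Y →L[ℝ] B →L[ℝ] Y) (D : B →L[ℝ] Y) : Prop :=
  ∃ y, ∀ a, D a = l a y - r y a

/-- `D` is a `T-S`-derivation: `D(ab) = T(a)·D(b) + D(a)·S(b)`. -/
def IsTSDeriv (m : B →L[ℝ] B →L[ℝ] B) (l : B →L[ℝ] Y →L[ℝ] Y)
    (r : Y →L[ℝ] B →L[ℝ] Y) (T S : B →L[ℝ] B) (D : B →L[ℝ] Y) : Prop :=
  ∀ a b, D (m a b) = l (T a) (D b) + r (D a) (S b)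

/-- `D` is an inner `T-S`-derivation: `D a = T(a)·y − y·S(a)` for some fixed `y`. -/
def IsTSInner (l : B →L[ℝ] Y →L[ℝ] Y) (r : Y →L[ℝ] B →L[ℝ] Y)
    (T S : B →L[ℝ] B) (D : B →L[ℝ] Y) : Prop :=
  ∃ y, ∀ a, D a = l (T a) y - r y (S a)

end DerivationSetup



-- ===== auxiliary lemmas =====
section Aux
open Filter Topology ContinuousLinearMap NormedSpace

theorem dual_add_apply' {E : Type*} [SeminormedAddCommGroup E] [NormedSpace ℝ E]
    (f g : Dual ℝ E) (x : E) : (f + g) x = f x + g x := rfl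

theorem dual_smul_apply' {E : Type*} [SeminormedAddCommGroup E] [NormedSpace ℝ E]
    (c : ℝ) (f : Dual ℝ E) (x : E) : (c • f) x = c * f x := rfl

theorem dual_ext' {E : Type*} [SeminormedAddCommGroup E] [NormedSpace ℝ E]
    {f g : Dual ℝ E} (h : ∀ x, f x = g x) : f = g := ContinuousLinearMap.ext h

theorem incl_apply' {E : Type*} [SeminormedAddCommGroup E] [NormedSpace ℝ E]
    (e : E) (f : Dual ℝ E) :
    (inclusionInDoubleDual ℝ E e : Dual ℝ (Dual ℝ E)) f = f e := rfl

/-- A linear functional on a dual space which is weak-star continuous is an evaluation. -/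
theorem weakdual_char {E : Type*} [SeminormedAddCommGroup E] [NormedSpace ℝ E]
    (φ : Dual ℝ E →ₗ[ℝ] ℝ) (hφ : Continuous fun F : WeakDual ℝ E => φ F) :
    ∃ e : E, ∀ F : Dual ℝ E, φ F = F e := by
  classical
  have h0 : (fun F : WeakDual ℝ E => φ F) ⁻¹' (Metric.ball 0 1) ∈ 𝓝 (0 : WeakDual ℝ E) := by
    have : ContinuousAt (fun F : WeakDual ℝ E => φ F) 0 := hφ.continuousAt
    have hb : Metric.ball (0:ℝ) 1 ∈ 𝓝 ((fun F : WeakDual ℝ E => φ F) 0) := by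
      simp only [map_zero]
      convert Metric.ball_mem_nhds (0:ℝ) one_pos using 2
      exact map_zero φ
    exact this.preimage_mem_nhds hb
  rw [show (𝓝 (0 : WeakDual ℝ E)) = Filter.comap (fun x : WeakDual ℝ E => fun y : E => (topDualPairing ℝ E) x y) (𝓝 (fun y : E => (topDualPairing ℝ E) (0 : WeakDual ℝ E) y)) from nhds_induced _ _] at h0
  obtain ⟨S, hS, hSsub⟩ := Filter.mem_comap.1 h0
  have hzero : (fun y : E => (topDualPairing ℝ E) (0 : WeakDual ℝ E) y) = (0 : E → ℝ) := by
    funext y; rfl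
  rw [hzero, nhds_pi] at hS
  obtain ⟨I, hIfin, t, ht, hsub⟩ := Filter.mem_pi.1 hS
  -- key: functionals vanishing on I are killed by φ
  have key : ∀ F : Dual ℝ E, (∀ e ∈ I, F e = 0) → φ F = 0 := by
    intro F hF
    by_contra hne
    have hmem : ∀ c : ℝ, |c * φ F| < 1 := by
      intro c
      have h1 : (fun y : E => (topDualPairing ℝ E) ((c • F : Dual ℝ E) : WeakDual ℝ E) y) ∈ I.pi t := by
        intro e he
        have hce : (topDualPairing ℝ E) ((c • F : Dual ℝ E) : WeakDual ℝ E) e = 0 := by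
          change c • F e = 0
          rw [hF e he, smul_zero]
        exact (congrArg (· ∈ t e) hce).mpr (mem_of_mem_nhds (ht e))
      have h2 : ((c • F : Dual ℝ E) : WeakDual ℝ E) ∈
          (fun F : WeakDual ℝ E => φ F) ⁻¹' (Metric.ball 0 1) := hSsub (hsub h1)
      have h3 : φ (c • F) ∈ Metric.ball (0:ℝ) 1 := h2
      simpa [Real.dist_eq, map_smul, smul_eq_mul, abs_mul] using h3
    have := hmem (2 / φ F)
    rw [div_mul_cancel₀ 2 hne] at this
    norm_num at this
  haveI : Finite I := hIfin.to_subtype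
  haveI : Fintype I := Fintype.ofFinite I
  set L : I → (Dual ℝ E →ₗ[ℝ] ℝ) := fun i => (topDualPairing ℝ E).flip (i : E) with hL
  have hker : ⨅ i, LinearMap.ker (L i) ≤ LinearMap.ker φ := by
    intro F hF
    rw [LinearMap.mem_ker]
    refine key F fun e he => ?_
    have := (Submodule.mem_iInf _).1 hF ⟨e, he⟩
    exact LinearMap.mem_ker.1 this
  have hspan := mem_span_of_iInf_ker_le_ker hker
  obtain ⟨c, hc⟩ := (Submodule.mem_span_range_iff_exists_fun ℝ).1 hspan
  refine ⟨∑ i : I, c i • (i : E), fun F => ?_⟩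
  have := LinearMap.congr_fun hc F
  simp only [LinearMap.coe_sum, Finset.sum_apply, LinearMap.smul_apply, smul_eq_mul, hL,
    LinearMap.flip_apply, topDualPairing_apply] at this
  rw [← this, map_sum]
  simp [mul_comm]
  exact Finset.sum_congr rfl fun i _ => rfl


/-- A weak-star continuous linear functional on the bidual vanishing on the canonical image
of `E` vanishes identically. -/
theorem wstar_vanish {E : Type*} [SeminormedAddCommGroup E] [NormedSpace ℝ E]
    (φ : Dual ℝ (Dual ℝ E) →ₗ[ℝ] ℝ)
    (hφ : Continuous fun F : WeakDual ℝ (Dual ℝ E) => φ F)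
    (h0 : ∀ e : E, φ (inclusionInDoubleDual ℝ E e) = 0) :
    ∀ F : Dual ℝ (Dual ℝ E), φ F = 0 := by
  obtain ⟨e', he'⟩ := weakdual_char φ hφ
  have he0 : e' = 0 := by
    refine ContinuousLinearMap.ext fun e => ?_
    have := (he' _).symm.trans (h0 e)
    exact this
  intro F
  rw [he', he0, map_zero]

end Aux

section Statements
set_option maxHeartbeats 1000000
open Filter Topology ContinuousLinearMap NormedSpace

variable {A : Type*} [NonUnitalNormedRing A] [NormedSpace ℝ A]
  [SMulCommClass ℝ A A] [IsScalarTower ℝ A A] [CompleteSpace A]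

variable {X : Type*} [NormedAddCommGroup X] [NormedSpace ℝ X] [CompleteSpace X]


set_option linter.unusedSectionVars false in
private theorem step1 (M : BanachBimodule A X) (T S : A →L[ℝ] A)
    (D : A →L[ℝ] Dual ℝ X)
    (hD : IsTSDeriv (ContinuousLinearMap.mul ℝ A) (modDualLeft M) (modDualRight M) T S D)
    (a : A) (G : Dual ℝ (Dual ℝ A)) (x'' : Dual ℝ (Dual ℝ X)) :
    adjCLM (adjCLM D) (fArens A (inclusionInDoubleDual ℝ A a) G) x'' =
      modL3 M (secondAdj A T (inclusionInDoubleDual ℝ A a)) (adjCLM (adjCLM D) G) x'' +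
      modR3 M (adjCLM (adjCLM D) (inclusionInDoubleDual ℝ A a)) (secondAdj A S G) x'' := by
  obtain ⟨a'', ha''⟩ : ∃ a'' : Dual ℝ (Dual ℝ A), a'' = inclusionInDoubleDual ℝ A a := ⟨_, rfl⟩
  have hev : ∀ f : Dual ℝ A, a'' f = f a := fun f => by rw [ha'']; rfl
  rw [← ha'']
  simp only [fArens, ext3, modL3, modR3, modL2, modR2, secondAdj, adjCLM_apply, ext1_apply,
    ContinuousLinearMap.flip_apply, hev]
  rw [← map_add]
  congr 1
  refine dual_ext' fun b => ?_
  have h := hD a b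
  simp only [ContinuousLinearMap.mul_apply'] at h
  simp only [ContinuousLinearMap.add_apply, ext1_apply, adjCLM_apply,
    ContinuousLinearMap.mul_apply', h, map_add, modDualLeft, modDualRight,
    ContinuousLinearMap.flip_apply]
  congr 2
  subst ha''
  rfl

/-- If `a'' ↦ x''T''(a'')` is weak-star to weak continuous for all `x'' ∈ X**` and
`D : A → X*` is a `T-S`-derivation, then `D'' : A** → X***` is a `T''-S''`-derivation. -/
theorem secondAdjoint_TSderivation_module (M : BanachBimodule A X) (T S : A →L[ℝ] A)
    (hw : ∀ x'' : Dual ℝ (Dual ℝ X), WStarToWCont (fun a'' => modR2 M x'' (secondAdj A T a'')))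
    (D : A →L[ℝ] Dual ℝ X)
    (hD : IsTSDeriv (ContinuousLinearMap.mul ℝ A) (modDualLeft M) (modDualRight M) T S D) :
    IsTSDeriv (fArens A) (modL3 M) (modR3 M)
      (secondAdj A T) (secondAdj A S) (adjCLM (adjCLM D)) := by
  intro F G
  refine dual_ext' fun x'' => ?_
  have key : ∀ F' : Dual ℝ (Dual ℝ A),
      adjCLM (adjCLM D) (fArens A F' G) x''
        - modL3 M (secondAdj A T F') (adjCLM (adjCLM D) G) x''
        - modR3 M (adjCLM (adjCLM D) F') (secondAdj A S G) x'' = 0 := by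
    let φ : Dual ℝ (Dual ℝ A) →ₗ[ℝ] ℝ :=
      { toFun := fun F' => adjCLM (adjCLM D) (fArens A F' G) x''
          - modL3 M (secondAdj A T F') (adjCLM (adjCLM D) G) x''
          - modR3 M (adjCLM (adjCLM D) F') (secondAdj A S G) x''
        map_add' := by
          intro F₁ F₂
          simp only [map_add, ContinuousLinearMap.add_apply, dual_add_apply']
          ring
        map_smul' := by
          intro c F'
          simp only [map_smul, ContinuousLinearMap.smul_apply, dual_smul_apply', smul_eq_mul, RingHom.id_apply]
          ring }
    have h1 : Continuous fun F' : WeakDual ℝ (Dual ℝ A) =>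
        adjCLM (adjCLM D) (fArens A (WeakDual.toNormedDual F') G) x'' :=
      WeakDual.eval_continuous (ext1 (ext1 (ContinuousLinearMap.mul ℝ A)) G (adjCLM D x''))
    have h2 : Continuous fun F' : WeakDual ℝ (Dual ℝ A) =>
        modL3 M (secondAdj A T (WeakDual.toNormedDual F')) (adjCLM (adjCLM D) G) x'' := by
      have hev2 := WeakBilin.eval_continuous (topDualPairing ℝ (Dual ℝ (Dual ℝ X))).flip
        (adjCLM (adjCLM D) G : StrongDual ℝ (Dual ℝ (Dual ℝ X)))
      exact hev2.comp (hw x'')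
    have h3 : Continuous fun F' : WeakDual ℝ (Dual ℝ A) =>
        modR3 M (adjCLM (adjCLM D) (WeakDual.toNormedDual F')) (secondAdj A S G) x'' :=
      WeakDual.eval_continuous (adjCLM D (modL2 M (secondAdj A S G) x''))
    have hcont : Continuous fun F' : WeakDual ℝ (Dual ℝ A) => φ F' := (h1.sub h2).sub h3
    have hvan : ∀ b : A, φ (inclusionInDoubleDual ℝ A b) = 0 := by
      intro b
      have hs := step1 M T S D hD b G x''
      simp only [φ, LinearMap.coe_mk, AddHom.coe_mk]
      linarith
    intro F'
    have hres := wstar_vanish φ hcont hvan F'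
    simpa only [φ, LinearMap.coe_mk, AddHom.coe_mk] using hres
  have hk := key F
  simp only [ContinuousLinearMap.add_apply, dual_add_apply']
  linarith


end Statements
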